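/- Let p be a prime, let p' be the smallest prime greater than p, let g be a positive even integer, and let j ≥ 1 be an integer with j + 1 < p' - 1 and g < 2p'. Then n_{g,j}(p') = (p' - j - 1) · n_{g,j}(p) + j · n_{g,j+1}(p). -/

import Mathlib

open Finset

/-- `b` is the next totative of `P` after `a`: `a < b`, `b` is coprime to `P`,
and no integer strictly between `a` and `b` is coprime to `P`. -/
def IsNextTot (P a b : ℕ) : Prop :=
  a < b ∧ Nat.Coprime b P ∧ ∀ x, a < x → x < b → ¬ Nat.Coprime x P

/-- Starting at `r`, the successive totatives of `P` after `r` occur at the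
successive partial sums of the list of gaps `c`. -/
def MatchesGaps (P : ℕ) : ℕ → List ℕ → Prop
  | _, [] => True
  | r, c :: cs => IsNextTot P r (r + c) ∧ MatchesGaps P (r + c) cs

open scoped Classical in
/-- `Ncount p s` : the number of (cyclic) occurrences of the constellation `s`
in the cycle of gaps `𝒢(p#)`.  Since the pattern of coprimality to `p#` is
periodic with period `p#`, this is the number of totatives `r ∈ [1, p#]` of `p#`
at which the gap pattern `s` begins. -/
noncomputable def Ncount (p : ℕ) (s : List ℕ) : ℕ :=
  ((Finset.Icc 1 (primorial p)).filter
    (fun r => Nat.Coprime r (primorial p) ∧ MatchesGaps (primorial p) r s)).card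

open scoped Classical in
/-- `nCount p g j` : the number of (cyclic) occurrences in `𝒢(p#)` of
constellations of length `j` with sum `g` (the driving terms of length `j`
for the gap `g`). -/
noncomputable def nCount (p g j : ℕ) : ℕ :=
  ((Finset.Icc 1 (primorial p)).filter
    (fun r => Nat.Coprime r (primorial p) ∧
      ∃ c : List ℕ, c.length = j ∧ c.sum = g ∧ MatchesGaps (primorial p) r c)).card

open scoped Classical

lemma primorial_succ_prime (p p' : ℕ) (hp' : p'.Prime) (hlt : p < p')
    (hmin : ∀ q : ℕ, q.Prime → p < q → p' ≤ q) :
    primorial p' = p' * primorial p := by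
  unfold primorial
  have h : (range (p' + 1)).filter Nat.Prime
      = insert p' ((range (p + 1)).filter Nat.Prime) := by
    ext q
    simp only [mem_insert, mem_filter, mem_range]
    constructor
    · rintro ⟨hq1, hq2⟩
      rcases lt_or_ge p q with h1 | h1
      · left; exact le_antisymm (by omega) (hmin q hq2 h1)
      · right; exact ⟨by omega, hq2⟩
    · rintro (rfl | ⟨h1, h2⟩)
      · exact ⟨by omega, hp'⟩
      · exact ⟨by omega, h2⟩
  rw [show ((range (p'+1)).filter fun q => q.Prime) = (range (p'+1)).filter Nat.Prime from rfl, h,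
    prod_insert (by simp [mem_filter]; omega)]


lemma two_dvd_primorial (p : ℕ) (hp : p.Prime) : 2 ∣ primorial p := by
  unfold primorial
  refine dvd_prod_of_mem _ ?_
  simp only [mem_filter, mem_range]
  exact ⟨by have := hp.two_le; omega, Nat.prime_two⟩

lemma coprime_odd (P x : ℕ) (h2 : 2 ∣ P) (hx : Nat.Coprime x P) : Odd x := by
  rcases Nat.even_or_odd x with he | ho
  · exfalso
    have : (2:ℕ) ∣ Nat.gcd x P := Nat.dvd_gcd he.two_dvd h2
    rw [hx] at this; omega
  · exact ho

noncomputable def cnt (P r g : ℕ) : ℕ :=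
  ((Finset.Icc (r+1) (r+g)).filter (fun x => Nat.Coprime x P)).card

lemma cnt_split (P r a b : ℕ) (hab : a ≤ b) :
    cnt P r b = cnt P r a + ((Finset.Icc (r+a+1) (r+b)).filter (fun x => Nat.Coprime x P)).card := by
  unfold cnt
  rw [← card_union_of_disjoint (by
    rw [Finset.disjoint_left]; intro x hx hy
    simp only [mem_filter, mem_Icc] at hx hy; omega)]
  congr 1
  ext x
  simp only [mem_union, mem_filter, mem_Icc]
  constructor
  · rintro ⟨h1, h2⟩; rcases le_or_gt x (r+a) with h | h
    · exact Or.inl ⟨⟨by omega, by omega⟩, h2⟩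
    · exact Or.inr ⟨⟨by omega, by omega⟩, h2⟩
  · rintro (⟨h1, h2⟩ | ⟨h1, h2⟩) <;> exact ⟨⟨by omega, by omega⟩, h2⟩

lemma cnt_next (P r b : ℕ) (h : IsNextTot P r b) : cnt P r (b - r) = 1 := by
  obtain ⟨hlt, hcop, hnone⟩ := h
  unfold cnt
  have : (Finset.Icc (r+1) (r + (b - r))).filter (fun x => Nat.Coprime x P) = {b} := by
    ext x
    simp only [mem_filter, mem_Icc, mem_singleton]
    constructor
    · rintro ⟨⟨h1, h2⟩, h3⟩
      by_contra hne
      exact hnone x (by omega) (by omega) h3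
    · rintro rfl; exact ⟨⟨by omega, by omega⟩, hcop⟩
  rw [this, card_singleton]

lemma matches_to_cnt (P : ℕ) : ∀ (c : List ℕ) (r : ℕ), Nat.Coprime r P →
    MatchesGaps P r c → (Nat.Coprime (r + c.sum) P ∧ cnt P r c.sum = c.length) := by
  intro c
  induction c with
  | nil =>
    intro r hr _
    refine ⟨by simpa using hr, ?_⟩
    unfold cnt
    simp
  | cons a cs ih =>
    intro r hr hm
    obtain ⟨hnext, hrest⟩ := hm
    obtain ⟨hc1, hc2⟩ := ih (r + a) hnext.2.1 hrest
    have ha : 1 ≤ a := by have := hnext.1; omega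
    constructor
    · rw [List.sum_cons, show r + (a + cs.sum) = r + a + cs.sum by ring]
      exact hc1
    · rw [List.sum_cons, List.length_cons]
      rw [cnt_split P r a (a + cs.sum) (by omega)]
      have h1 : cnt P r a = 1 := by
        have := cnt_next P r (r + a) hnext
        simpa using this
      rw [h1]
      have h2 : ((Finset.Icc (r+a+1) (r+(a+cs.sum))).filter (fun x => Nat.Coprime x P)).card
          = cs.length := by
        have : r + (a + cs.sum) = (r + a) + cs.sum := by ring
        rw [this]
        exact hc2
      rw [h2]; ring

lemma cnt_to_matches (P : ℕ) : ∀ (j r g : ℕ), Nat.Coprime r P →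
    Nat.Coprime (r+g) P → cnt P r g = j →
    ∃ c : List ℕ, c.length = j ∧ c.sum = g ∧ MatchesGaps P r c := by
  intro j
  induction j with
  | zero =>
    intro r g hr hrg hcnt
    have hg : g = 0 := by
      by_contra hne
      have : r + g ∈ (Finset.Icc (r+1) (r+g)).filter (fun x => Nat.Coprime x P) := by
        simp only [mem_filter, mem_Icc]
        exact ⟨⟨by omega, le_refl _⟩, hrg⟩
      have := card_pos.mpr ⟨_, this⟩
      unfold cnt at hcnt; omega
    exact ⟨[], rfl, by simp [hg], trivial⟩
  | succ j ih =>
    intro r g hr hrg hcnt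
    set F := (Finset.Icc (r+1) (r+g)).filter (fun x => Nat.Coprime x P) with hF
    have hne : F.Nonempty := by
      rw [← card_pos]
      unfold cnt at hcnt; rw [← hF] at hcnt; omega
    set b := F.min' hne with hb
    have hbmem : b ∈ F := F.min'_mem hne
    simp only [hF, mem_filter, mem_Icc] at hbmem
    obtain ⟨⟨hb1, hb2⟩, hb3⟩ := hbmem
    have hnext : IsNextTot P r b := by
      refine ⟨by omega, hb3, ?_⟩
      intro x hx1 hx2 hx3
      have : x ∈ F := by
        simp only [hF, mem_filter, mem_Icc]
        exact ⟨⟨by omega, by omega⟩, hx3⟩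
      have := F.min'_le x this
      omega
    have hsplit := cnt_split P r (b - r) g (by omega)
    have hcnt1 : cnt P r (b - r) = 1 := cnt_next P r b hnext
    have hrb : r + (b - r) = b := by omega
    rw [hsplit, hcnt1, hrb] at hcnt
    have hcnt2 : cnt P b (g - (b - r)) = j := by
      unfold cnt
      have : b + (g - (b - r)) = r + g := by omega
      rw [this]
      omega
    have hbg : b + (g - (b - r)) = r + g := by omega
    obtain ⟨c', hc1, hc2, hc3⟩ := ih b (g - (b - r)) hb3 (by rw [hbg]; exact hrg) hcnt2
    refine ⟨(b - r) :: c', by simp [hc1], by simp [hc2]; omega, ?_⟩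
    exact ⟨by rwa [hrb], by rwa [hrb]⟩

lemma distinct_mod (q x y d : ℕ) (hodd : Odd q) (hx : Odd x) (hy : Odd y)
    (hxy : x < y) (hle : y - x < 2*q) (h1 : q ∣ x + d) (h2 : q ∣ y + d) : False := by
  have hdvd : q ∣ y - x := by
    have := Nat.dvd_sub h2 h1
    simpa [show y + d - (x + d) = y - x by omega] using this
  obtain ⟨t, ht⟩ := hdvd
  obtain ⟨a, ha⟩ := hodd
  obtain ⟨b, hb⟩ := hx
  obtain ⟨c, hc⟩ := hy
  have hq0 : 0 < q := by omega
  have ht2 : t < 2 := by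
    by_contra h
    have : 2 * q ≤ q * t := by
      calc 2 * q = q * 2 := by ring
      _ ≤ q * t := Nat.mul_le_mul_left q (by omega)
    omega
  interval_cases t <;> omega

lemma prime_coprime_primorial (p q : ℕ) (hq : q.Prime) (hlt : p < q) :
    Nat.Coprime q (primorial p) := by
  unfold primorial
  apply Nat.Coprime.prod_right
  intro i hi
  simp only [Finset.mem_filter, Finset.mem_range] at hi
  exact (Nat.coprime_primes hq hi.2).mpr (by omega)


lemma coprime_mul_shift (P q y k : ℕ) (hq : q.Prime) :
    Nat.Coprime (y + k * P) (q * P) ↔ (¬ q ∣ (y + k * P)) ∧ Nat.Coprime y P := by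
  rw [Nat.coprime_mul_iff_right, Nat.coprime_add_mul_right_left]
  rw [Nat.coprime_comm, hq.coprime_iff_not_dvd]

lemma cnt_shift (P q g s k : ℕ) (hq : q.Prime) :
    cnt (q * P) (s + k * P) g =
      (((Finset.Icc (s+1) (s+g)).filter (fun x => Nat.Coprime x P)).filter
        (fun y => ¬ q ∣ (y + k * P))).card := by
  unfold cnt
  have himg : Finset.Icc (s + k*P + 1) (s + k*P + g)
      = (Finset.Icc (s+1) (s+g)).image (· + k * P) := by
    ext x
    simp only [mem_image, mem_Icc]
    constructor
    · intro hx; exact ⟨x - k*P, by omega, by omega⟩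
    · rintro ⟨y, hy, rfl⟩; omega
  rw [himg, Finset.filter_image, Finset.filter_filter]
  rw [Finset.card_image_of_injective _ (add_left_injective _)]
  congr 1
  apply Finset.filter_congr
  intro y _
  rw [coprime_mul_shift P q y k hq]
  tauto

lemma unique_hit (q P x : ℕ) (hq : 0 < q) (hcop : Nat.Coprime P q) :
    ∃! k, k ∈ Finset.range q ∧ q ∣ (x + k * P) := by
  haveI : NeZero q := ⟨by omega⟩
  have hu : IsUnit (P : ZMod q) := (ZMod.isUnit_iff_coprime P q).mpr hcop
  have hinv : (P : ZMod q) * (↑P)⁻¹ = 1 := ZMod.mul_inv_of_unit _ hu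
  set k0 : ZMod q := -(x : ZMod q) * (↑P)⁻¹ with hk0
  have hval : ((k0.val : ℕ) : ZMod q) = k0 := by rw [ZMod.natCast_val, ZMod.cast_id]
  refine ⟨k0.val, ⟨?_, ?_⟩, ?_⟩
  · exact Finset.mem_range.mpr (ZMod.val_lt k0)
  · rw [← ZMod.natCast_eq_zero_iff]
    push_cast
    rw [hval, hk0]
    have : (P : ZMod q)⁻¹ * P = 1 := by rw [mul_comm]; exact hinv
    rw [mul_assoc, this, mul_one]
    ring
  · rintro k ⟨hk1, hk2⟩
    rw [← ZMod.natCast_eq_zero_iff] at hk2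
    push_cast at hk2
    have kp : (k : ZMod q) * P = -(x : ZMod q) := by linear_combination hk2
    have h1 : (k : ZMod q) * ((P : ZMod q) * (↑P)⁻¹) = -(x : ZMod q) * (↑P)⁻¹ := by
      rw [← mul_assoc, kp]
    rw [hinv, mul_one] at h1
    have := congrArg ZMod.val (h1.trans hk0.symm)
    rwa [ZMod.val_natCast_of_lt (Finset.mem_range.mp hk1)] at this

lemma inner_count (P q g j s : ℕ) (hP2 : 2 ∣ P) (hq : q.Prime) (hqodd : Odd q)
    (hPq : Nat.Coprime P q) (hg : 0 < g) (hglt : g < 2*q) (hj : 1 ≤ j) (hjq : j + 2 < q) :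
    ((Finset.range q).filter (fun k => Nat.Coprime (s + k*P) (q*P) ∧
        Nat.Coprime (s + k*P + g) (q*P) ∧ cnt (q*P) (s+k*P) g = j)).card
    = (q - j - 1) * (if Nat.Coprime s P ∧ Nat.Coprime (s+g) P ∧ cnt P s g = j then 1 else 0)
      + j * (if Nat.Coprime s P ∧ Nat.Coprime (s+g) P ∧ cnt P s g = j+1 then 1 else 0) := by
  set F := (Finset.Icc (s+1) (s+g)).filter (fun x => Nat.Coprime x P) with hF
  -- dispose of the cases where s or s+g is not coprime to P
  by_cases hs : Nat.Coprime s P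
  swap
  · have : ((Finset.range q).filter (fun k => Nat.Coprime (s + k*P) (q*P) ∧
        Nat.Coprime (s + k*P + g) (q*P) ∧ cnt (q*P) (s+k*P) g = j)) = ∅ := by
      rw [Finset.filter_eq_empty_iff]
      intro k _ hT
      exact hs (((coprime_mul_shift P q s k hq).mp hT.1).2)
    rw [this]
    simp [hs]
  by_cases hsg : Nat.Coprime (s+g) P
  swap
  · have : ((Finset.range q).filter (fun k => Nat.Coprime (s + k*P) (q*P) ∧
        Nat.Coprime (s + k*P + g) (q*P) ∧ cnt (q*P) (s+k*P) g = j)) = ∅ := by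
      rw [Finset.filter_eq_empty_iff]
      intro k _ hT
      have := hT.2.1
      rw [show s + k*P + g = (s+g) + k*P by ring] at this
      exact hsg (((coprime_mul_shift P q (s+g) k hq).mp this).2)
    rw [this]
    simp [hsg]
  -- basic facts
  have hq0 : 0 < q := hq.pos
  set F' := insert s F with hF'
  have hsgF : s + g ∈ F := by
    simp only [hF, mem_filter, mem_Icc]
    exact ⟨⟨by omega, le_refl _⟩, hsg⟩
  have hsnF : s ∉ F := by
    simp only [hF, mem_filter, mem_Icc]
    intro h; omega
  have hcardF' : F'.card = F.card + 1 := Finset.card_insert_of_notMem hsnF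
  have hmem_odd : ∀ y ∈ F', Odd y := by
    intro y hy
    rcases Finset.mem_insert.mp hy with rfl | hy
    · exact coprime_odd P y hP2 hs
    · simp only [hF, mem_filter] at hy
      exact coprime_odd P y hP2 hy.2
  have hmem_rng : ∀ y ∈ F', s ≤ y ∧ y ≤ s + g := by
    intro y hy
    rcases Finset.mem_insert.mp hy with rfl | hy
    · omega
    · simp only [hF, mem_filter, mem_Icc] at hy; omega
  -- at most one element of F' is hit for a given k
  have honehit : ∀ k, ∀ y ∈ F', ∀ z ∈ F', q ∣ y + k*P → q ∣ z + k*P → y = z := by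
    intro k y hy z hz h1 h2
    by_contra hne
    rcases Nat.lt_or_ge y z with h | h
    · exact distinct_mod q y z (k*P) hqodd (hmem_odd y hy) (hmem_odd z hz) h
        (by have := hmem_rng y hy; have := hmem_rng z hz; omega) h1 h2
    · exact distinct_mod q z y (k*P) hqodd (hmem_odd z hz) (hmem_odd y hy) (by omega)
        (by have := hmem_rng y hy; have := hmem_rng z hz; omega) h2 h1
  -- the unique solution function κ
  have hex : ∀ y : ℕ, ∃! k, k ∈ Finset.range q ∧ q ∣ (y + k * P) := fun y =>
    unique_hit q P y hq0 hPq
  set κ : ℕ → ℕ := fun y => (hex y).exists.choose with hκ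
  have hκ1 : ∀ y, κ y ∈ Finset.range q ∧ q ∣ (y + κ y * P) := fun y => (hex y).exists.choose_spec
  have hκ2 : ∀ y k, k ∈ Finset.range q → q ∣ (y + k * P) → k = κ y := by
    intro y k hk hdvd
    exact ((hex y).unique ⟨hk, hdvd⟩ (hκ1 y))
  have hκinj : Set.InjOn κ F' := by
    intro y hy z hz hyz
    exact honehit (κ y) y hy z hz (hκ1 y).2 (by rw [hyz]; exact (hκ1 z).2)
  -- rewrite the three defining conditions
  have hTiff : ∀ k, (Nat.Coprime (s + k*P) (q*P) ∧
        Nat.Coprime (s + k*P + g) (q*P) ∧ cnt (q*P) (s+k*P) g = j)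
      ↔ (¬ q ∣ (s + k*P) ∧ ¬ q ∣ ((s+g) + k*P) ∧ (F.filter (fun y => ¬ q ∣ (y + k*P))).card = j) := by
    intro k
    rw [coprime_mul_shift P q s k hq, cnt_shift P q g s k hq,
      show s + k*P + g = (s+g) + k*P by ring, coprime_mul_shift P q (s+g) k hq]
    rw [← hF]
    tauto
  have hDle : ∀ k, (F.filter (fun y => q ∣ (y + k*P))).card ≤ 1 := by
    intro k
    rw [Finset.card_le_one]
    intro y hy z hz
    simp only [mem_filter] at hy hz
    exact honehit k y (Finset.mem_insert_of_mem hy.1) z (Finset.mem_insert_of_mem hz.1) hy.2 hz.2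
  have hDsum : ∀ k, (F.filter (fun y => ¬ q ∣ (y + k*P))).card
      = F.card - (F.filter (fun y => q ∣ (y + k*P))).card := by
    intro k
    have := Finset.card_filter_add_card_filter_not (s := F)
      (p := fun y => q ∣ (y + k*P))
    omega
  set m := F.card with hm
  have hm1 : 1 ≤ m := Finset.card_pos.mpr ⟨_, hsgF⟩
  have hcnt_eq : cnt P s g = m := rfl
  -- main case split on m
  by_cases hmj : m = j
  · -- count = q - j - 1
    have hset : ((Finset.range q).filter (fun k => Nat.Coprime (s + k*P) (q*P) ∧
        Nat.Coprime (s + k*P + g) (q*P) ∧ cnt (q*P) (s+k*P) g = j))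
        = Finset.range q \ F'.image κ := by
      ext k
      simp only [mem_filter, Finset.mem_sdiff, Finset.mem_image]
      rw [hTiff k]
      constructor
      · rintro ⟨hk, h1, h2, h3⟩
        refine ⟨hk, ?_⟩
        rintro ⟨y, hy, rfl⟩
        have hdvdy := (hκ1 y).2
        rcases Finset.mem_insert.mp hy with rfl | hyF
        · exact h1 hdvdy
        · -- y ∈ F is hit, so D k ≥ 1, contradiction with card = j = m
          have hymem : y ∈ F.filter (fun z => q ∣ (z + κ y * P)) := by
            simp only [mem_filter]; exact ⟨hyF, hdvdy⟩
          have hD1 : 1 ≤ (F.filter (fun z => q ∣ (z + κ y * P))).card :=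
            Finset.card_pos.mpr ⟨_, hymem⟩
          have := hDsum (κ y)
          omega
      · rintro ⟨hk, hnot⟩
        have hnohit : ∀ y ∈ F', ¬ q ∣ (y + k*P) := by
          intro y hy hdvd
          exact hnot ⟨y, hy, (hκ2 y k hk hdvd).symm⟩
        refine ⟨hk, hnohit s (Finset.mem_insert_self s F), hnohit (s+g) (Finset.mem_insert_of_mem hsgF), ?_⟩
        have hD0 : (F.filter (fun y => q ∣ (y + k*P))).card = 0 := by
          rw [Finset.card_eq_zero, Finset.filter_eq_empty_iff]
          intro y hy
          exact hnohit y (Finset.mem_insert_of_mem hy)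
        rw [hDsum k, hD0]
        omega
    rw [hset, Finset.card_sdiff_of_subset (by
      intro k hk
      simp only [Finset.mem_image] at hk
      obtain ⟨y, _, rfl⟩ := hk
      exact (hκ1 y).1)]
    rw [Finset.card_image_of_injOn hκinj, Finset.card_range, hcardF']
    rw [if_pos ⟨hs, hsg, by omega⟩, if_neg (by rintro ⟨-, -, h⟩; omega)]
    omega
  by_cases hmj1 : m = j + 1
  · -- count = j
    have hset : ((Finset.range q).filter (fun k => Nat.Coprime (s + k*P) (q*P) ∧
        Nat.Coprime (s + k*P + g) (q*P) ∧ cnt (q*P) (s+k*P) g = j))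
        = (F.erase (s+g)).image κ := by
      ext k
      simp only [mem_filter, Finset.mem_image, Finset.mem_erase]
      rw [hTiff k]
      constructor
      · rintro ⟨hk, h1, h2, h3⟩
        have hD1 : (F.filter (fun y => q ∣ (y + k*P))).card = 1 := by
          have := hDsum k; have := hDle k; omega
        obtain ⟨y, hy⟩ := Finset.card_eq_one.mp hD1
        have hymem : y ∈ F.filter (fun z => q ∣ (z + k*P)) := by rw [hy]; exact Finset.mem_singleton_self y
        simp only [mem_filter] at hymem
        refine ⟨y, ⟨?_, hymem.1⟩, (hκ2 y k hk hymem.2).symm⟩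
        rintro rfl
        exact h2 hymem.2
      · rintro ⟨y, ⟨hyne, hyF⟩, rfl⟩
        have hdvdy := (hκ1 y).2
        refine ⟨(hκ1 y).1, ?_, ?_, ?_⟩
        · intro hdvd
          have := honehit (κ y) s (Finset.mem_insert_self s F) y (Finset.mem_insert_of_mem hyF) hdvd hdvdy
          subst this
          exact hsnF hyF
        · intro hdvd
          have := honehit (κ y) (s+g) (Finset.mem_insert_of_mem hsgF) y (Finset.mem_insert_of_mem hyF) hdvd hdvdy
          exact hyne this.symm
        · have hD1 : (F.filter (fun z => q ∣ (z + κ y * P))).card = 1 := by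
            have hge : 1 ≤ (F.filter (fun z => q ∣ (z + κ y * P))).card :=
              Finset.card_pos.mpr ⟨y, by simp only [mem_filter]; exact ⟨hyF, hdvdy⟩⟩
            have := hDle (κ y); omega
          rw [hDsum (κ y), hD1]
          omega
    rw [hset, Finset.card_image_of_injOn (hκinj.mono (by
      intro y hy
      exact Finset.mem_insert_of_mem (Finset.mem_of_mem_erase hy)))]
    rw [Finset.card_erase_of_mem hsgF]
    rw [if_neg (by rintro ⟨-, -, h⟩; omega), if_pos ⟨hs, hsg, by omega⟩]
    omega
  · -- count = 0
    have hset : ((Finset.range q).filter (fun k => Nat.Coprime (s + k*P) (q*P) ∧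
        Nat.Coprime (s + k*P + g) (q*P) ∧ cnt (q*P) (s+k*P) g = j)) = ∅ := by
      rw [Finset.filter_eq_empty_iff]
      intro k _ hT
      rw [hTiff k] at hT
      obtain ⟨h1, h2, h3⟩ := hT
      have := hDsum k
      have := hDle k
      omega
    rw [hset]
    rw [if_neg (by rintro ⟨-, -, h⟩; omega), if_neg (by rintro ⟨-, -, h⟩; omega)]
    simp

lemma matches_iff (P r j g : ℕ) (hr : Nat.Coprime r P) :
    (∃ c : List ℕ, c.length = j ∧ c.sum = g ∧ MatchesGaps P r c) ↔
      (Nat.Coprime (r+g) P ∧ cnt P r g = j) := by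
  constructor
  · rintro ⟨c, rfl, rfl, hm⟩
    exact matches_to_cnt P c r hr hm
  · rintro ⟨h1, h2⟩
    exact cnt_to_matches P j r g hr h1 h2

theorem driving_term_recurrence (p p' : ℕ) (hp : p.Prime) (hp' : p'.Prime) (hlt : p < p')
    (hmin : ∀ q : ℕ, q.Prime → p < q → p' ≤ q)
    (g : ℕ) (hg : 0 < g) (heven : Even g)
    (j : ℕ) (hj : 1 ≤ j) (hjlt : j + 1 < p' - 1) (hglt : g < 2 * p') :
    nCount p' g j = (p' - j - 1) * nCount p g j + j * nCount p g (j + 1) := by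
  set P := primorial p with hP
  set q := p' with hqd
  have hQ : primorial p' = q * P := primorial_succ_prime p p' hp' hlt hmin
  have hP2 : 2 ∣ P := two_dvd_primorial p hp
  have hP0 : 0 < P := primorial_pos p
  have hq0 : 0 < q := hp'.pos
  have hqodd : Odd q := hp'.odd_of_ne_two (by have := hp.two_le; omega)
  have hPq : Nat.Coprime P q := (prime_coprime_primorial p p' hp' hlt).symm
  have hjq : j + 2 < q := by omega
  -- Step 1: rewrite nCount p' g j as a filter over Icc 1 (q*P) with the cnt predicate
  have step1 : nCount p' g j = ((Finset.Icc 1 (q*P)).filter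
      (fun r => Nat.Coprime r (q*P) ∧ Nat.Coprime (r+g) (q*P) ∧ cnt (q*P) r g = j)).card := by
    unfold nCount
    rw [hQ]
    congr 1
    apply Finset.filter_congr
    intro r _
    constructor
    · rintro ⟨h1, h2⟩
      exact ⟨h1, (matches_iff (q*P) r j g h1).mp h2⟩
    · rintro ⟨h1, h2⟩
      exact ⟨h1, (matches_iff (q*P) r j g h1).mpr h2⟩
  -- Step 2: reindex over Icc 1 P ×ˢ range q
  have step2 : ((Finset.Icc 1 (q*P)).filter
      (fun r => Nat.Coprime r (q*P) ∧ Nat.Coprime (r+g) (q*P) ∧ cnt (q*P) r g = j)).card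
      = (((Finset.Icc 1 P) ×ˢ (Finset.range q)).filter
      (fun sk => Nat.Coprime (sk.1 + sk.2 * P) (q*P) ∧
        Nat.Coprime (sk.1 + sk.2 * P + g) (q*P) ∧ cnt (q*P) (sk.1 + sk.2 * P) g = j)).card := by
    apply Finset.card_nbij' (fun r => ((r-1) % P + 1, (r-1) / P)) (fun sk => sk.1 + sk.2 * P)
    · intro r hr
      simp only [Finset.mem_coe, Finset.mem_filter, Finset.mem_Icc] at hr
      obtain ⟨⟨hr1, hr2⟩, hpred⟩ := hr
      have hkey : (r-1) % P + 1 + (r-1)/P * P = r := by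
        have := Nat.mod_add_div' (r-1) P
        omega
      simp only [Finset.mem_coe, Finset.mem_filter, Finset.mem_product, Finset.mem_Icc, Finset.mem_range]
      refine ⟨⟨⟨by omega, by have := Nat.mod_lt (r-1) hP0; omega⟩, ?_⟩, ?_⟩
      · exact Nat.div_lt_of_lt_mul (show r - 1 < P * q by rw [mul_comm]; omega)
      · rw [hkey]; exact hpred
    · intro sk hsk
      simp only [Finset.mem_coe, Finset.mem_filter, Finset.mem_product, Finset.mem_Icc, Finset.mem_range] at hsk
      obtain ⟨⟨⟨h1, h2⟩, h3⟩, hpred⟩ := hsk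
      simp only [Finset.mem_coe, Finset.mem_filter, Finset.mem_Icc]
      refine ⟨⟨by omega, ?_⟩, hpred⟩
      have : sk.2 * P ≤ (q-1) * P := Nat.mul_le_mul_right P (by omega)
      have : (q-1) * P + P = q * P := by
        have : q - 1 + 1 = q := by omega
        calc (q-1) * P + P = (q - 1 + 1) * P := by ring
        _ = q * P := by rw [this]
      omega
    · intro r hr
      simp only [Finset.mem_coe, Finset.mem_filter, Finset.mem_Icc] at hr
      have := Nat.mod_add_div' (r-1) P
      simp only
      omega
    · intro sk hsk
      simp only [Finset.mem_coe, Finset.mem_filter, Finset.mem_product, Finset.mem_Icc, Finset.mem_range] at hsk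
      obtain ⟨⟨⟨h1, h2⟩, h3⟩, hpred⟩ := hsk
      have he1 : (sk.1 + sk.2 * P - 1) % P = sk.1 - 1 := by
        have : sk.1 + sk.2 * P - 1 = (sk.1 - 1) + sk.2 * P := by omega
        rw [this, Nat.add_mul_mod_self_right]
        exact Nat.mod_eq_of_lt (by omega)
      have he2 : (sk.1 + sk.2 * P - 1) / P = sk.2 := by
        have : sk.1 + sk.2 * P - 1 = (sk.1 - 1) + sk.2 * P := by omega
        rw [this, Nat.add_mul_div_right _ _ hP0]
        rw [Nat.div_eq_of_lt (by omega)]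
        omega
      simp only [he1, he2]
      have : sk.1 - 1 + 1 = sk.1 := by omega
      rw [this]
  -- Step 3: turn the product count into a double sum and apply inner_count
  have step3 : (((Finset.Icc 1 P) ×ˢ (Finset.range q)).filter
      (fun sk => Nat.Coprime (sk.1 + sk.2 * P) (q*P) ∧
        Nat.Coprime (sk.1 + sk.2 * P + g) (q*P) ∧ cnt (q*P) (sk.1 + sk.2 * P) g = j)).card
      = ∑ s ∈ Finset.Icc 1 P,
          ((q - j - 1) * (if Nat.Coprime s P ∧ Nat.Coprime (s+g) P ∧ cnt P s g = j then 1 else 0)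
            + j * (if Nat.Coprime s P ∧ Nat.Coprime (s+g) P ∧ cnt P s g = j+1 then 1 else 0)) := by
    rw [Finset.card_filter, Finset.sum_product]
    apply Finset.sum_congr rfl
    intro s _
    rw [← Finset.card_filter]
    exact inner_count P q g j s hP2 hp' hqodd hPq hg hglt hj hjq
  -- Step 4: split the sum
  have step4 : ∑ s ∈ Finset.Icc 1 P,
          ((q - j - 1) * (if Nat.Coprime s P ∧ Nat.Coprime (s+g) P ∧ cnt P s g = j then 1 else 0)
            + j * (if Nat.Coprime s P ∧ Nat.Coprime (s+g) P ∧ cnt P s g = j+1 then 1 else 0))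
      = (q - j - 1) * ((Finset.Icc 1 P).filter
            (fun s => Nat.Coprime s P ∧ Nat.Coprime (s+g) P ∧ cnt P s g = j)).card
        + j * ((Finset.Icc 1 P).filter
            (fun s => Nat.Coprime s P ∧ Nat.Coprime (s+g) P ∧ cnt P s g = j+1)).card := by
    rw [Finset.sum_add_distrib, ← Finset.mul_sum, ← Finset.mul_sum,
      ← Finset.card_filter, ← Finset.card_filter]
  -- Step 5: identify the two filters with nCount at level p
  have step5 : ((Finset.Icc 1 P).filter
      (fun s => Nat.Coprime s P ∧ Nat.Coprime (s+g) P ∧ cnt P s g = j)).card = nCount p g j := by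
    unfold nCount
    rw [← hP]
    congr 1
    apply Finset.filter_congr
    intro s _
    constructor
    · rintro ⟨h1, h2, h3⟩
      exact ⟨h1, (matches_iff P s j g h1).mpr ⟨h2, h3⟩⟩
    · rintro ⟨h1, h2⟩
      obtain ⟨h2, h3⟩ := (matches_iff P s j g h1).mp h2
      exact ⟨h1, h2, h3⟩
  have step6 : ((Finset.Icc 1 P).filter
      (fun s => Nat.Coprime s P ∧ Nat.Coprime (s+g) P ∧ cnt P s g = j+1)).card
        = nCount p g (j+1) := by
    unfold nCount
    rw [← hP]
    congr 1
    apply Finset.filter_congr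
    intro s _
    constructor
    · rintro ⟨h1, h2, h3⟩
      exact ⟨h1, (matches_iff P s (j+1) g h1).mpr ⟨h2, h3⟩⟩
    · rintro ⟨h1, h2⟩
      obtain ⟨h2, h3⟩ := (matches_iff P s (j+1) g h1).mp h2
      exact ⟨h1, h2, h3⟩
  rw [step1, step2, step3, step4, step5, step6]
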